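/- arXiv:1404.2594 — 3 statements merged into one kernel-verified Lean document; each statement's English description precedes it below -/
import Mathlib

section
/- Let (W,S) be a Coxeter system acting on ℝⁿ via the Tits representation, with Tits cone U = ⋃_{w∈W} w·C̄₀ (the orbit of the closed fundamental chamber). Then U is a convex cone with vertex 0. -/
set_option linter.unusedSectionVars false


/-- The coefficients `k(s,t) = -cos(π / m(s,t))` of the bilinear form associated to a Coxeter
matrix, with the convention `k(s,t) = -1` when `m(s,t) = ∞` (encoded by `M s t = 0`). -/
noncomputable def coxCoeff {B : Type*} (M : CoxeterMatrix B) (s t : B) : ℝ :=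
  if M s t = 0 then -1 else -Real.cos (Real.pi / (M s t))

/-- The canonical symmetric bilinear form of a Coxeter matrix on `ℝ^S`, with
`B(α_s, α_t) = -cos(π / m(s,t))` on the standard basis vectors `α_s`. -/
noncomputable def coxForm {B : Type*} [Fintype B] (M : CoxeterMatrix B) (x y : B → ℝ) : ℝ :=
  ∑ s, ∑ t, x s * y t * coxCoeff M s t

/-- The simple root `α_s`, a standard basis vector of `ℝ^S`. -/
noncomputable def simpleRoot {B : Type*} [DecidableEq B] (s : B) : B → ℝ := Pi.single s 1

/-- The open fundamental chamber `C₀ = {x : B(x, α_s) > 0 for all s}` of the Tits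
representation. -/
noncomputable def fundamentalChamber {B : Type*} [Fintype B] [DecidableEq B]
    (M : CoxeterMatrix B) : Set (B → ℝ) :=
  {x | ∀ s, 0 < coxForm M x (simpleRoot s)}

/-- The Tits cone `U = ⋃_{w ∈ W} w · C̄₀` associated to a representation `ρ` of `W` on `ℝ^S`. -/
noncomputable def titsCone {B W : Type*} [Fintype B] [DecidableEq B] [Group W]
    (M : CoxeterMatrix B) (ρ : W →* ((B → ℝ) ≃ₗ[ℝ] (B → ℝ))) : Set (B → ℝ) :=
  ⋃ w : W, (ρ w) '' (closure (fundamentalChamber M))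

/-- The assertion that `ρ` is the Tits (geometric) representation of the Coxeter system `cs`:
each simple reflection `s` acts by `x ↦ x - 2 B(x, α_s) α_s`. -/
def IsTitsRepresentation {B W : Type*} [Fintype B] [DecidableEq B] [Group W]
    (M : CoxeterMatrix B) (cs : CoxeterSystem M W)
    (ρ : W →* ((B → ℝ) ≃ₗ[ℝ] (B → ℝ))) : Prop :=
  ∀ (s : B) (x : B → ℝ),
    ρ (cs.simple s) x = x - (2 * coxForm M x (simpleRoot s)) • simpleRoot s


section Basics
variable {B : Type*} [Fintype B] [DecidableEq B] (M : CoxeterMatrix B)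

lemma coxCoeff_symm (s t : B) : coxCoeff M s t = coxCoeff M t s := by
  unfold coxCoeff; rw [M.symmetric s t]

lemma coxCoeff_self (s : B) : coxCoeff M s s = 1 := by
  unfold coxCoeff
  rw [if_neg (by simp [M.diagonal s])]
  simp [M.diagonal s]

lemma coxForm_add_left (x y z : B → ℝ) :
    coxForm M (x + y) z = coxForm M x z + coxForm M y z := by
  simp only [coxForm, Pi.add_apply, add_mul, Finset.sum_add_distrib]

lemma coxForm_smul_left (c : ℝ) (x z : B → ℝ) :
    coxForm M (c • x) z = c * coxForm M x z := by
  simp only [coxForm, Pi.smul_apply, smul_eq_mul, Finset.mul_sum, mul_assoc]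

lemma coxForm_add_right (x y z : B → ℝ) :
    coxForm M x (y + z) = coxForm M x y + coxForm M x z := by
  simp only [coxForm, Pi.add_apply, mul_add, add_mul, Finset.sum_add_distrib]

lemma coxForm_smul_right (c : ℝ) (x z : B → ℝ) :
    coxForm M x (c • z) = c * coxForm M x z := by
  simp only [coxForm, Pi.smul_apply, smul_eq_mul, Finset.mul_sum]
  congr 1; ext s; congr 1; ext t; ring

lemma coxForm_sub_left (x y z : B → ℝ) :
    coxForm M (x - y) z = coxForm M x z - coxForm M y z := by
  simp only [coxForm, Pi.sub_apply, sub_mul, Finset.sum_sub_distrib]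

lemma coxForm_sub_right (x y z : B → ℝ) :
    coxForm M x (y - z) = coxForm M x y - coxForm M x z := by
  simp only [coxForm, Pi.sub_apply, mul_sub, sub_mul, Finset.sum_sub_distrib]

lemma coxForm_zero_right (x : B → ℝ) : coxForm M x 0 = 0 := by
  simp [coxForm]

lemma coxForm_neg_right (x y : B → ℝ) : coxForm M x (-y) = -coxForm M x y := by
  have := coxForm_sub_right M x 0 y
  rw [coxForm_zero_right] at this
  simpa using this

lemma coxForm_symm (x y : B → ℝ) : coxForm M x y = coxForm M y x := by
  unfold coxForm
  rw [Finset.sum_comm]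
  apply Finset.sum_congr rfl; intro t _
  apply Finset.sum_congr rfl; intro s _
  rw [coxCoeff_symm]; ring

lemma coxForm_simpleRoot_right (x : B → ℝ) (t : B) :
    coxForm M x (simpleRoot t) = ∑ s, x s * coxCoeff M s t := by
  unfold coxForm simpleRoot
  apply Finset.sum_congr rfl; intro s _
  rw [Finset.sum_eq_single t]
  · simp
  · intro b _ hb; simp [Pi.single_apply, hb]
  · intro h; exact absurd (Finset.mem_univ t) h

lemma coxForm_simpleRoot_simpleRoot (s t : B) :
    coxForm M (simpleRoot s) (simpleRoot t) = coxCoeff M s t := by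
  rw [coxForm_simpleRoot_right]
  rw [Finset.sum_eq_single s]
  · simp [simpleRoot]
  · intro b _ hb; simp [simpleRoot, Pi.single_apply, hb]
  · intro h; exact absurd (Finset.mem_univ s) h

lemma coxForm_self_simpleRoot (s : B) :
    coxForm M (simpleRoot s) (simpleRoot s) = 1 := by
  rw [coxForm_simpleRoot_simpleRoot, coxCoeff_self]

lemma coxForm_expand_right (x v : B → ℝ) :
    coxForm M x v = ∑ t, v t * coxForm M x (simpleRoot t) := by
  conv_lhs => rw [coxForm, Finset.sum_comm]
  apply Finset.sum_congr rfl; intro t _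
  rw [coxForm_simpleRoot_right, Finset.mul_sum]
  apply Finset.sum_congr rfl; intro s _; ring

lemma coxForm_smul_single_self (c : ℝ) (s : B) :
    coxForm M (c • simpleRoot s) (c • simpleRoot s) = c ^ 2 := by
  rw [coxForm_smul_left, coxForm_smul_right, coxForm_self_simpleRoot]; ring

end Basics


section Rep
open CoxeterSystem
variable {B W : Type*} [Fintype B] [DecidableEq B] [Group W]
    {M : CoxeterMatrix B} {cs : CoxeterSystem M W}
    {ρ : W →* ((B → ℝ) ≃ₗ[ℝ] (B → ℝ))} (hρ : IsTitsRepresentation M cs ρ)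

/-- The closed fundamental chamber. -/
def fundD (M : CoxeterMatrix B) : Set (B → ℝ) := {x | ∀ s, 0 ≤ coxForm M x (simpleRoot s)}

/-- Nonnegative vectors. -/
def PosVec (v : B → ℝ) : Prop := ∀ i, 0 ≤ v i

/-- Nonpositive vectors. -/
def NegVec (v : B → ℝ) : Prop := ∀ i, v i ≤ 0

lemma rep_mul_apply (a b : W) (x : B → ℝ) : ρ (a * b) x = ρ a (ρ b x) := by
  rw [map_mul]; rfl

include hρ

lemma rep_simple_simpleRoot_self (i : B) : ρ (cs.simple i) (simpleRoot i) = -simpleRoot i := by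
  rw [hρ, coxForm_self_simpleRoot]
  ext j
  simp [Pi.single_apply, simpleRoot]
  split <;> ring

lemma rep_simple_invol (i : B) (x : B → ℝ) :
    ρ (cs.simple i) (ρ (cs.simple i) x) = x := by
  rw [← rep_mul_apply, cs.simple_mul_simple_self i, map_one]; rfl

lemma coxForm_rep_simple (i : B) (x y : B → ℝ) :
    coxForm M (ρ (cs.simple i) x) (ρ (cs.simple i) y) = coxForm M x y := by
  rw [hρ, hρ, coxForm_sub_left, coxForm_sub_right, coxForm_sub_right,
    coxForm_smul_left, coxForm_smul_right, coxForm_smul_right, coxForm_smul_left,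
    coxForm_self_simpleRoot, coxForm_symm M (simpleRoot i) y]
  ring

lemma coxForm_rep_invariant (w : W) (x y : B → ℝ) :
    coxForm M (ρ w x) (ρ w y) = coxForm M x y := by
  induction w using cs.simple_induction_left with
  | one => simp only [map_one]; rfl
  | mul_simple_left w i ih =>
    rw [rep_mul_apply, rep_mul_apply, coxForm_rep_simple hρ, ih]

end Rep

/-! ### Trigonometric coefficients -/

/-- `sin (j π / m) / sin (π / m)`, with the convention `j` when `m = 0`. -/
noncomputable def sratio (m j : ℕ) : ℝ :=
  if m = 0 then j else Real.sin (j * (Real.pi / m)) / Real.sin (Real.pi / m)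

/-- `cos (π / m)`, with the convention `1` when `m = 0`. -/
noncomputable def cosv (m : ℕ) : ℝ := if m = 0 then 1 else Real.cos (Real.pi / m)

lemma sin_div_pos {m : ℕ} (hm0 : m ≠ 0) (hm1 : m ≠ 1) : 0 < Real.sin (Real.pi / m) := by
  have h2 : 2 ≤ m := by omega
  apply Real.sin_pos_of_pos_of_lt_pi
  · positivity
  · rw [div_lt_iff₀ (by positivity)]
    have h : (1:ℝ) < m := by exact_mod_cast (by omega : 1 < m)
    nlinarith [Real.pi_pos, mul_pos (sub_pos.mpr h) Real.pi_pos]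

lemma sratio_zero (m : ℕ) : sratio m 0 = 0 := by simp [sratio]

lemma sratio_one {m : ℕ} (hm1 : m ≠ 1) : sratio m 1 = 1 := by
  unfold sratio
  split
  · simp
  · next hm0 => rw [Nat.cast_one, one_mul, div_self (ne_of_gt (sin_div_pos hm0 hm1))]

lemma sratio_nonneg {m j : ℕ} (hm1 : m ≠ 1) (h : m = 0 ∨ j ≤ m) : 0 ≤ sratio m j := by
  unfold sratio
  split
  · positivity
  · next hm0 =>
    have hjm : j ≤ m := by rcases h with h | h; exact absurd h hm0; exact h
    apply div_nonneg _ (le_of_lt (sin_div_pos hm0 hm1))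
    apply Real.sin_nonneg_of_nonneg_of_le_pi
    · positivity
    · rw [← mul_div_assoc, div_le_iff₀ (by positivity : (0:ℝ) < (m:ℝ))]
      have : (j:ℝ) ≤ (m:ℝ) := by exact_mod_cast hjm
      nlinarith [Real.pi_pos]

lemma sratio_rec {m : ℕ} (hm1 : m ≠ 1) (n : ℕ) :
    sratio m (n+2) = 2 * cosv m * sratio m (n+1) - sratio m n := by
  unfold sratio cosv
  split
  · push_cast; ring
  · next hm0 =>
    have key : ∀ x t : ℝ, Real.sin (x + t) = 2 * Real.cos t * Real.sin x - Real.sin (x - t) := by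
      intro x t; rw [Real.sin_add, Real.sin_sub]; ring
    have h1 : ((n:ℝ)+2) * (Real.pi / m) = ((n:ℝ)+1) * (Real.pi / m) + (Real.pi / m) := by ring
    have h2 : (n:ℝ) * (Real.pi / m) = ((n:ℝ)+1) * (Real.pi / m) - (Real.pi / m) := by ring
    push_cast
    rw [h1, h2, key]
    ring

section Plane
open CoxeterSystem
variable {B W : Type*} [Fintype B] [DecidableEq B] [Group W]
    {M : CoxeterMatrix B} {cs : CoxeterSystem M W}
    {ρ : W →* ((B → ℝ) ≃ₗ[ℝ] (B → ℝ))} (hρ : IsTitsRepresentation M cs ρ)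

lemma coxCoeff_eq_neg_cosv (s t : B) : coxCoeff M s t = -(cosv (M s t)) := by
  unfold coxCoeff cosv
  split <;> simp

include hρ

lemma rep_simple_simpleRoot_other {s t : B} (hst : s ≠ t) :
    ρ (cs.simple s) (simpleRoot t)
      = simpleRoot t + (2 * cosv (M s t)) • simpleRoot s := by
  rw [hρ, coxForm_simpleRoot_simpleRoot, coxCoeff_eq_neg_cosv, M.symmetric t s]
  module

lemma rep_alt_simpleRoot {s t : B} (hst : s ≠ t) (q : ℕ) :
    ρ (cs.wordProd (alternatingWord s t q)) (simpleRoot s)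
      = (if Even q then sratio (M s t) (q+1) else sratio (M s t) q) • simpleRoot s
      + (if Even q then sratio (M s t) q else sratio (M s t) (q+1)) • simpleRoot t := by
  have hm1 : M s t ≠ 1 := M.off_diagonal s t hst
  induction q with
  | zero =>
    simp only [alternatingWord, cs.wordProd_nil, map_one, if_pos (Even.zero)]
    rw [sratio_zero, sratio_one hm1]
    show simpleRoot s = _
    module
  | succ q ih =>
    rw [alternatingWord_succ', cs.wordProd_cons, rep_mul_apply]
    rcases Nat.even_or_odd q with hq | hq
    · have h1 : ¬ Even (q+1) := by simp [Nat.even_add_one, hq]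
      rw [if_pos hq, if_pos hq] at ih
      rw [if_pos hq, if_neg h1, if_neg h1, ih, map_add, map_smul, map_smul,
        rep_simple_simpleRoot_other hρ (Ne.symm hst), rep_simple_simpleRoot_self hρ t,
        M.symmetric t s, sratio_rec hm1 q]
      module
    · have h0 : ¬ Even q := Nat.not_even_iff_odd.mpr hq
      have h1 : Even (q+1) := Nat.even_add_one.mpr h0
      rw [if_neg h0, if_neg h0] at ih
      rw [if_neg h0, if_pos h1, if_pos h1, ih, map_add, map_smul, map_smul,
        rep_simple_simpleRoot_self hρ s, rep_simple_simpleRoot_other hρ hst,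
        sratio_rec hm1 q]
      module
end Plane

section Positivity
open CoxeterSystem
variable {B W : Type*} [Fintype B] [DecidableEq B] [Group W]
    {M : CoxeterMatrix B} {cs : CoxeterSystem M W}
    {ρ : W →* ((B → ℝ) ≃ₗ[ℝ] (B → ℝ))} (hρ : IsTitsRepresentation M cs ρ)

/-- Key unfolding lemma: if `s` is a non-descent and `t` a descent of `w`, then `w` ends in
a reduced alternating word in `s, t`, preceded by an element `u` with non-descents at `s, t`. -/
lemma descent_chain : ∀ (n : ℕ) (w : W) (s t : B), cs.length w = n → s ≠ t →
    cs.length (w * cs.simple s) = n + 1 → cs.length (w * cs.simple t) + 1 = n →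
    ∃ (u : W) (q : ℕ), 1 ≤ q ∧ w = u * cs.wordProd (alternatingWord s t q) ∧
      n = cs.length u + q ∧ cs.length (u * cs.simple s) = cs.length u + 1 ∧
      cs.length (u * cs.simple t) = cs.length u + 1 := by
  intro n
  induction n using Nat.strong_induction_on with
  | _ n IH =>
    intro w s t hw hst hs ht
    have hn1 : 1 ≤ n := by omega
    set w₂ := w * cs.simple t with hw₂
    have hw₂len : cs.length w₂ = n - 1 := by omega
    have hw₂t : w₂ * cs.simple t = w := by
      rw [hw₂, mul_assoc, cs.simple_mul_simple_self, mul_one]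
    have hw₂tlen : cs.length (w₂ * cs.simple t) = cs.length w₂ + 1 := by
      rw [hw₂t, hw, hw₂len]; omega
    rcases cs.length_mul_simple w₂ s with hcase | hcase
    · -- u := w₂, q := 1
      refine ⟨w₂, 1, le_refl 1, ?_, by omega, by omega, hw₂tlen⟩
      have : alternatingWord s t 1 = [t] := rfl
      rw [this, cs.wordProd_singleton, hw₂t]
    · -- descent at s for w₂; recurse with roles swapped
      have hw₂ne : w₂ ≠ 1 := by
        intro h
        rw [h] at hcase
        simp only [one_mul, cs.length_simple, cs.length_one] at hcase
        omega
      have hw₂len1 : 1 ≤ cs.length w₂ := by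
        rcases Nat.eq_zero_or_pos (cs.length w₂) with h | h
        · exact absurd (cs.length_eq_zero_iff.mp h) hw₂ne
        · exact h
      obtain ⟨u, q, hq1, hdecomp, hlen, hut, hus⟩ :=
        IH (n-1) (by omega) w₂ t s hw₂len (Ne.symm hst) (by omega) (by omega)
      refine ⟨u, q + 1, by omega, ?_, by omega, hus, hut⟩
      rw [← hw₂t, hdecomp, alternatingWord_succ, mul_assoc, ← cs.wordProd_concat]

include hρ in
/-- Tits' positivity theorem. -/
lemma pos_rep_simpleRoot : ∀ (n : ℕ) (w : W) (s : B), cs.length w = n →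
    cs.length (w * cs.simple s) = n + 1 → PosVec (ρ w (simpleRoot s)) := by
  intro n
  induction n using Nat.strong_induction_on with
  | _ n IH =>
    intro w s hw hs
    rcases Nat.eq_zero_or_pos n with hn | hn
    · have : w = 1 := cs.length_eq_zero_iff.mp (by omega)
      subst this
      intro i
      simp only [map_one]
      show (0:ℝ) ≤ simpleRoot s i
      unfold simpleRoot
      rcases eq_or_ne i s with h | h <;> simp [Pi.single_apply, h]
    · -- pick a right descent t
      have hwne : w ≠ 1 := by
        intro h; rw [h] at hw; rw [cs.length_one] at hw; omega
      obtain ⟨t, hdesc⟩ := cs.exists_rightDescent_of_ne_one hwne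
      have ht : cs.length (w * cs.simple t) + 1 = n := by
        unfold CoxeterSystem.IsRightDescent at hdesc
        rcases cs.length_mul_simple w t with h | h <;> omega
      have hst : s ≠ t := by
        intro h; subst h
        unfold CoxeterSystem.IsRightDescent at hdesc
        omega
      obtain ⟨u, q, hq1, hdecomp, hlen, hus, hut⟩ :=
        descent_chain (cs := cs) n w s t hw hst hs ht
      -- the alternating word is reduced
      have hred : cs.IsReduced (alternatingWord s t q) := by
        unfold CoxeterSystem.IsReduced
        rw [length_alternatingWord]
        have h1 : cs.length (cs.wordProd (alternatingWord s t q)) ≤ q := by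
          have := cs.length_wordProd_le (alternatingWord s t q)
          rwa [length_alternatingWord] at this
        have h2 : q ≤ cs.length (cs.wordProd (alternatingWord s t q)) := by
          have := cs.length_mul_le u (cs.wordProd (alternatingWord s t q))
          rw [← hdecomp, hw] at this
          omega
        omega
      -- q ≤ M s t when M s t ≠ 0
      have hqm : M s t = 0 ∨ q + 1 ≤ M s t := by
        rcases eq_or_ne (M s t) 0 with h0 | h0
        · left; exact h0
        · right
          have hqle : q ≤ M s t := by
            by_contra hgt
            exact cs.not_isReduced_alternatingWord s t h0 (by omega) hred
          rcases Nat.lt_or_ge q (M s t) with h | h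
          · omega
          · -- q = M s t : contradiction via braid relation
            exfalso
            have hqeq : q = M s t := by omega
            have hbraid : cs.wordProd (alternatingWord s t q)
                = cs.wordProd (alternatingWord t s q) := by
              have := cs.wordProd_braidWord_eq s t
              unfold CoxeterSystem.braidWord at this
              rw [hqeq, M.symmetric s t]
              rw [M.symmetric s t] at this
              exact this
            have hq1' : q - 1 + 1 = q := by omega
            have halt : alternatingWord t s q = (alternatingWord s t (q-1)).concat s := by
              conv_lhs => rw [← hq1']
              rfl
            have hws : w * cs.simple s = u * cs.wordProd (alternatingWord s t (q-1)) := by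
              rw [hdecomp, hbraid, halt, cs.wordProd_concat, mul_assoc, mul_assoc,
                cs.simple_mul_simple_self, mul_one]
            have : cs.length (w * cs.simple s) ≤ cs.length u + (q - 1) := by
              rw [hws]
              calc cs.length (u * cs.wordProd (alternatingWord s t (q-1)))
                  ≤ cs.length u + cs.length (cs.wordProd (alternatingWord s t (q-1))) :=
                    cs.length_mul_le _ _
                _ ≤ cs.length u + (q-1) := by
                    have := cs.length_wordProd_le (alternatingWord s t (q-1))
                    rw [length_alternatingWord] at this
                    omega
            omega
      -- trig coefficients
      have hm1 : M s t ≠ 1 := M.off_diagonal s t hst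
      have hplane := rep_alt_simpleRoot hρ hst q
      have ha : 0 ≤ (if Even q then sratio (M s t) (q+1) else sratio (M s t) q) := by
        split <;> apply sratio_nonneg hm1 <;> omega
      have hb : 0 ≤ (if Even q then sratio (M s t) q else sratio (M s t) (q+1)) := by
        split <;> apply sratio_nonneg hm1 <;> omega
      -- IH at u
      have hulen : cs.length u < n := by omega
      have hps : PosVec (ρ u (simpleRoot s)) :=
        IH (cs.length u) hulen u s rfl hus
      have hpt : PosVec (ρ u (simpleRoot t)) :=
        IH (cs.length u) hulen u t rfl hut
      -- assemble
      rw [hdecomp, rep_mul_apply, hplane, map_add, map_smul, map_smul]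
      intro i
      simp only [Pi.add_apply, Pi.smul_apply, smul_eq_mul]
      have := hps i
      have := hpt i
      positivity

end Positivity

section Roots
open CoxeterSystem
variable {B W : Type*} [Fintype B] [DecidableEq B] [Group W]
    {M : CoxeterMatrix B} {cs : CoxeterSystem M W}
    {ρ : W →* ((B → ℝ) ≃ₗ[ℝ] (B → ℝ))} (hρ : IsTitsRepresentation M cs ρ)

/-- Roots of the Tits representation. -/
def IsRootV (ρ : W →* ((B → ℝ) ≃ₗ[ℝ] (B → ℝ))) (v : B → ℝ) : Prop :=
  ∃ (w : W) (i : B), v = ρ w (simpleRoot i)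

lemma posVec_simpleRoot (i : B) : PosVec (simpleRoot i) := by
  intro j
  unfold simpleRoot
  rcases eq_or_ne j i with h | h <;> simp [Pi.single_apply, h]

include hρ

lemma neg_rep_simpleRoot {w : W} {s : B} (h : cs.length (w * cs.simple s) + 1 = cs.length w) :
    NegVec (ρ w (simpleRoot s)) := by
  set u := w * cs.simple s with hu
  have hus : u * cs.simple s = w := by
    rw [hu, mul_assoc, cs.simple_mul_simple_self, mul_one]
  have hpos : PosVec (ρ u (simpleRoot s)) := by
    apply pos_rep_simpleRoot hρ (cs.length u) u s rfl
    rw [hus]; omega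
  have : ρ w (simpleRoot s) = -(ρ u (simpleRoot s)) := by
    rw [← hus, rep_mul_apply, rep_simple_simpleRoot_self hρ, map_neg]
  rw [this]
  intro i
  simp only [Pi.neg_apply, neg_nonpos]
  exact hpos i

lemma root_dichotomy {v : B → ℝ} (hr : IsRootV ρ v) : PosVec v ∨ NegVec v := by
  obtain ⟨w, i, rfl⟩ := hr
  rcases cs.length_mul_simple w i with h | h
  · exact Or.inl (pos_rep_simpleRoot hρ (cs.length w) w i rfl h)
  · exact Or.inr (neg_rep_simpleRoot hρ h)

lemma coxForm_root_self {v : B → ℝ} (hr : IsRootV ρ v) : coxForm M v v = 1 := by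
  obtain ⟨w, i, rfl⟩ := hr
  rw [coxForm_rep_invariant hρ, coxForm_self_simpleRoot]

lemma root_flip_mem {s : B} {v : B → ℝ} (hr : IsRootV ρ v) :
    IsRootV ρ (ρ (cs.simple s) v) := by
  obtain ⟨w, i, rfl⟩ := hr
  exact ⟨cs.simple s * w, i, by rw [rep_mul_apply]⟩

lemma pos_root_flip {s : B} {v : B → ℝ} (hr : IsRootV ρ v) (hp : PosVec v)
    (hne : v ≠ simpleRoot s) : PosVec (ρ (cs.simple s) v) := by
  have hex : ∃ r, r ≠ s ∧ 0 < v r := by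
    by_contra h
    push_neg at h
    have hvs : v = v s • simpleRoot s := by
      funext r
      rcases eq_or_ne r s with hrs | hrs
      · subst hrs; simp [simpleRoot, Pi.single_apply]
      · have h1 := h r hrs
        have h2 := hp r
        have : v r = 0 := le_antisymm h1 h2
        simp [simpleRoot, Pi.single_apply, hrs, this]
    have hsq : (v s) ^ 2 = 1 := by
      have h1 := coxForm_root_self hρ hr
      rw [hvs, coxForm_smul_single_self] at h1
      exact h1
    have : (v s - 1) * (v s + 1) = 0 := by nlinarith
    rcases mul_eq_zero.mp this with h1 | h1
    · apply hne
      rw [hvs, show v s = 1 by linarith]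
      module
    · have h2 := hp s
      linarith
  obtain ⟨r, hrs, hvr⟩ := hex
  have hcoord : (ρ (cs.simple s) v) r = v r := by
    rw [hρ]
    simp [simpleRoot, Pi.single_apply, hrs.symm, Ne.symm hrs]
  rcases root_dichotomy hρ (root_flip_mem hρ (s := s) hr) with h | h
  · exact h
  · exfalso
    have := h r
    rw [hcoord] at this
    linarith

lemma finite_inv_roots : ∀ (n : ℕ) (w : W), cs.length w = n →
    {v : B → ℝ | IsRootV ρ v ∧ PosVec v ∧ NegVec (ρ w⁻¹ v)}.Finite := by
  intro n
  induction n using Nat.strong_induction_on with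
  | _ n IH =>
    intro w hw
    rcases Nat.eq_zero_or_pos n with hn | hn
    · have hw1 : w = 1 := cs.length_eq_zero_iff.mp (by omega)
      subst hw1
      apply Set.Finite.subset (Set.finite_empty)
      rintro v ⟨hr, hp, hneg⟩
      exfalso
      have hv0 : v = 0 := by
        funext i
        have h1 := hp i
        have h2 : (ρ (1 : W)⁻¹ v) i ≤ 0 := hneg i
        rw [inv_one, map_one] at h2
        exact le_antisymm h2 h1
      have := coxForm_root_self hρ hr
      rw [hv0] at this
      rw [coxForm_zero_right] at this
      norm_num at this
    · have hwne : w ≠ 1 := by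
        intro h; rw [h, cs.length_one] at hw; omega
      obtain ⟨s, hdesc⟩ := cs.exists_leftDescent_of_ne_one hwne
      unfold CoxeterSystem.IsLeftDescent at hdesc
      have hulen0 : cs.length (cs.simple s * w) + 1 = n := by
        rcases cs.length_simple_mul w s with h | h <;> omega
      set u := cs.simple s * w with hu
      have hsub : {v : B → ℝ | IsRootV ρ v ∧ PosVec v ∧ NegVec (ρ w⁻¹ v)} ⊆
          insert (simpleRoot s)
            ((ρ (cs.simple s)) '' {v : B → ℝ | IsRootV ρ v ∧ PosVec v ∧ NegVec (ρ u⁻¹ v)}) := by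
        rintro v ⟨hr, hp, hneg⟩
        rcases eq_or_ne v (simpleRoot s) with hv | hv
        · exact Or.inl hv
        · right
          refine ⟨ρ (cs.simple s) v, ⟨root_flip_mem hρ hr, pos_root_flip hρ hr hp hv, ?_⟩,
            rep_simple_invol hρ s v⟩
          have : ρ u⁻¹ (ρ (cs.simple s) v) = ρ w⁻¹ v := by
            rw [← rep_mul_apply]
            congr 2
            rw [hu, mul_inv_rev, cs.inv_simple, mul_assoc, cs.simple_mul_simple_self, mul_one]
          rw [this]
          exact hneg
      exact Set.Finite.subset (Set.Finite.insert _
        (Set.Finite.image _ (IH (cs.length u) (by omega) u rfl))) hsub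

end Roots

section Cone
open CoxeterSystem
variable {B W : Type*} [Fintype B] [DecidableEq B] [Group W]
    {M : CoxeterMatrix B} {cs : CoxeterSystem M W}
    {ρ : W →* ((B → ℝ) ≃ₗ[ℝ] (B → ℝ))} (hρ : IsTitsRepresentation M cs ρ)

/-- The set of positive roots made negative against `x`. -/
def nsetOf (M : CoxeterMatrix B) (ρ : W →* ((B → ℝ) ≃ₗ[ℝ] (B → ℝ))) (x : B → ℝ) :
    Set (B → ℝ) :=
  {v | IsRootV ρ v ∧ PosVec v ∧ coxForm M x v < 0}

lemma coxForm_nonneg_of_fundD {d v : B → ℝ} (hd : d ∈ fundD M) (hv : PosVec v) :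
    0 ≤ coxForm M d v := by
  rw [coxForm_expand_right]
  apply Finset.sum_nonneg
  intro t _
  exact mul_nonneg (hv t) (hd t)

include hρ

lemma nset_finite_of_chamber {w : W} {d : B → ℝ} (hd : d ∈ fundD M) :
    (nsetOf M ρ (ρ w d)).Finite := by
  apply Set.Finite.subset (finite_inv_roots hρ (cs.length w) w rfl)
  rintro v ⟨hr, hp, hneg⟩
  refine ⟨hr, hp, ?_⟩
  have hform : coxForm M d (ρ w⁻¹ v) < 0 := by
    have : coxForm M (ρ w d) (ρ w (ρ w⁻¹ v)) = coxForm M d (ρ w⁻¹ v) :=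
      coxForm_rep_invariant hρ w d (ρ w⁻¹ v)
    rw [← rep_mul_apply, mul_inv_cancel, map_one] at this
    rw [← this]
    exact hneg
  have hroot : IsRootV ρ (ρ w⁻¹ v) := by
    obtain ⟨w', i, rfl⟩ := hr
    exact ⟨w⁻¹ * w', i, by rw [rep_mul_apply]⟩
  rcases root_dichotomy hρ hroot with h | h
  · exact absurd (coxForm_nonneg_of_fundD hd h) (by linarith)
  · exact h

lemma mem_orbit_of_nset_finite : ∀ (n : ℕ) (x : B → ℝ), (nsetOf M ρ x).Finite →
    (nsetOf M ρ x).ncard = n → x ∈ ⋃ w : W, (ρ w) '' (fundD M) := by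
  intro n
  induction n using Nat.strong_induction_on with
  | _ n IH =>
    intro x hfin hcard
    by_cases hD : x ∈ fundD M
    · refine Set.mem_iUnion.mpr ⟨1, x, hD, ?_⟩
      rw [map_one]; rfl
    · have hex : ∃ s, coxForm M x (simpleRoot s) < 0 := by
        by_contra h
        push_neg at h
        exact hD h
      obtain ⟨s, hs⟩ := hex
      have hmem : simpleRoot s ∈ nsetOf M ρ x :=
        ⟨⟨1, s, by rw [map_one]; rfl⟩, posVec_simpleRoot s, hs⟩
      set x' := ρ (cs.simple s) x with hx'
      have hxx : ρ (cs.simple s) x' = x := rep_simple_invol hρ s x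
      have hsub : nsetOf M ρ x' ⊆ (ρ (cs.simple s)) '' (nsetOf M ρ x \ {simpleRoot s}) := by
        rintro v ⟨hr, hp, hneg⟩
        have hvs : v ≠ simpleRoot s := by
          intro h
          rw [h] at hneg
          have h2 := coxForm_rep_invariant hρ (cs.simple s) x (simpleRoot s)
          rw [rep_simple_simpleRoot_self hρ, coxForm_neg_right, ← hx'] at h2
          linarith
        set v₀ := ρ (cs.simple s) v with hv₀
        have hvv : ρ (cs.simple s) v₀ = v := rep_simple_invol hρ s v
        refine ⟨v₀, ⟨⟨root_flip_mem hρ hr, pos_root_flip hρ hr hp hvs, ?_⟩, ?_⟩, hvv⟩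
        · have h3 := coxForm_rep_invariant hρ (cs.simple s) x v₀
          rw [hvv, ← hx'] at h3
          rw [← h3]
          exact hneg
        · simp only [Set.mem_singleton_iff]
          intro h
          rw [h] at hvv
          rw [rep_simple_simpleRoot_self hρ] at hvv
          have := hp s
          rw [← hvv] at this
          simp [simpleRoot, Pi.single_apply] at this
          linarith
      have hfin' : (nsetOf M ρ x').Finite :=
        Set.Finite.subset (Set.Finite.image _ hfin.diff) hsub
      have hlt : (nsetOf M ρ x').ncard < n := by
        calc (nsetOf M ρ x').ncard
            ≤ ((ρ (cs.simple s)) '' (nsetOf M ρ x \ {simpleRoot s})).ncard :=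
              Set.ncard_le_ncard hsub (Set.Finite.image _ hfin.diff)
          _ = (nsetOf M ρ x \ {simpleRoot s}).ncard :=
              Set.ncard_image_of_injective _ (EquivLike.injective _)
          _ < (nsetOf M ρ x).ncard := Set.ncard_diff_singleton_lt_of_mem hmem hfin
          _ = n := hcard
      obtain ⟨w, d, hd, hwd⟩ := Set.mem_iUnion.mp
        (IH _ hlt x' hfin' rfl)
      refine Set.mem_iUnion.mpr ⟨cs.simple s * w, d, hd, ?_⟩
      rw [rep_mul_apply, hwd, hxx]

lemma nset_finite_of_mem_orbit {x : B → ℝ} (hx : x ∈ ⋃ w : W, (ρ w) '' (fundD M)) :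
    (nsetOf M ρ x).Finite := by
  obtain ⟨w, d, hd, rfl⟩ := Set.mem_iUnion.mp hx
  exact nset_finite_of_chamber hρ hd

lemma orbit_convex : Convex ℝ (⋃ w : W, (ρ w) '' (fundD M)) := by
  intro x hx y hy a b ha hb hab
  have hfx := nset_finite_of_mem_orbit hρ hx
  have hfy := nset_finite_of_mem_orbit hρ hy
  have hsub : nsetOf M ρ (a • x + b • y) ⊆ nsetOf M ρ x ∪ nsetOf M ρ y := by
    rintro v ⟨hr, hp, hneg⟩
    rw [coxForm_add_left, coxForm_smul_left, coxForm_smul_left] at hneg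
    by_contra h
    have hx1 : ¬ coxForm M x v < 0 :=
      fun hc => h (Set.mem_union_left _ ⟨hr, hp, hc⟩)
    have hy1 : ¬ coxForm M y v < 0 :=
      fun hc => h (Set.mem_union_right _ ⟨hr, hp, hc⟩)
    push_neg at hx1 hy1
    nlinarith
  have hfin : (nsetOf M ρ (a • x + b • y)).Finite :=
    Set.Finite.subset (hfx.union hfy) hsub
  exact mem_orbit_of_nset_finite hρ _ _ hfin rfl

lemma orbit_cone {c : ℝ} (hc : 0 ≤ c) {x : B → ℝ}
    (hx : x ∈ ⋃ w : W, (ρ w) '' (fundD M)) :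
    c • x ∈ ⋃ w : W, (ρ w) '' (fundD M) := by
  obtain ⟨w, d, hd, rfl⟩ := Set.mem_iUnion.mp hx
  refine Set.mem_iUnion.mpr ⟨w, c • d, ?_, by rw [map_smul]⟩
  intro t
  rw [coxForm_smul_left]
  exact mul_nonneg hc (hd t)

end Cone

section Closure
open CoxeterSystem
variable {B : Type*} [Fintype B] [DecidableEq B] (M : CoxeterMatrix B)

lemma continuous_coxForm_left (t : B) :
    Continuous fun x : B → ℝ => coxForm M x (simpleRoot t) := by
  simp only [coxForm_simpleRoot_right]
  exact continuous_finset_sum _ (fun i _ => (continuous_apply i).mul continuous_const)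

lemma isClosed_fundD : IsClosed (fundD M) := by
  have : fundD M = ⋂ t, {x : B → ℝ | 0 ≤ coxForm M x (simpleRoot t)} := by
    ext x
    simp [fundD, Set.mem_iInter]
  rw [this]
  exact isClosed_iInter (fun t => isClosed_le continuous_const (continuous_coxForm_left M t))

lemma closure_fundamentalChamber (hne : (fundamentalChamber M).Nonempty) :
    closure (fundamentalChamber M) = fundD M := by
  apply le_antisymm
  · apply closure_minimal _ (isClosed_fundD M)
    intro x hx t
    exact le_of_lt (hx t)
  · obtain ⟨x₀, hx₀⟩ := hne
    intro d hd
    have htend : Filter.Tendsto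
        (fun k : ℕ => d + ((k:ℝ)+1)⁻¹ • (x₀ - d)) Filter.atTop (nhds d) := by
      have h1 : Filter.Tendsto (fun k : ℕ => ((k:ℝ)+1)⁻¹) Filter.atTop (nhds 0) := by
        simpa [one_div] using tendsto_one_div_add_atTop_nhds_zero_nat (𝕜 := ℝ)
      have h2 := h1.smul_const (x₀ - d)
      rw [zero_smul] at h2
      have h3 := (tendsto_const_nhds (x := d) (f := Filter.atTop (α := ℕ))).add h2
      rw [add_zero] at h3
      exact h3
    apply mem_closure_of_tendsto htend
    apply Filter.Eventually.of_forall
    intro k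
    intro t
    have hk0 : (0:ℝ) < ((k:ℝ)+1)⁻¹ := by positivity
    have hk1 : ((k:ℝ)+1)⁻¹ ≤ 1 := by
      rw [inv_le_one_iff₀]
      right
      have : (0:ℝ) ≤ (k:ℝ) := Nat.cast_nonneg k
      linarith
    rw [coxForm_add_left, coxForm_smul_left, coxForm_sub_left]
    have h1 := hd t
    have h2 := hx₀ t
    nlinarith

end Closure


/-- Let `(W, S)` be a Coxeter system acting on `ℝⁿ` (`n = |S|`) via the Tits representation,
with Tits cone `U = ⋃_{w ∈ W} w · C̄₀`, the orbit of the closed fundamental chamber.  Then `U`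
is a convex cone with vertex `0`: it is convex and closed under multiplication by non-negative
scalars. -/
theorem titsCone_convex_cone {B W : Type*} [Fintype B] [DecidableEq B] [Group W]
    (M : CoxeterMatrix B) (cs : CoxeterSystem M W)
    (ρ : W →* ((B → ℝ) ≃ₗ[ℝ] (B → ℝ))) (hρ : IsTitsRepresentation M cs ρ) :
    Convex ℝ (titsCone M ρ) ∧
      ∀ c : ℝ, 0 ≤ c → ∀ x ∈ titsCone M ρ, c • x ∈ titsCone M ρ := by
  by_cases hne : (fundamentalChamber M).Nonempty
  · have hU : titsCone M ρ = ⋃ w : W, (ρ w) '' (fundD M) := by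
      unfold titsCone
      rw [closure_fundamentalChamber M hne]
    rw [hU]
    exact ⟨orbit_convex hρ, fun c hc x hx => orbit_cone hρ hc hx⟩
  · have hU : titsCone M ρ = ∅ := by
      unfold titsCone
      rw [Set.not_nonempty_iff_eq_empty.mp hne, closure_empty]
      simp
    rw [hU]
    exact ⟨convex_empty, fun c hc x hx => absurd hx (Set.notMem_empty x)⟩
end

section
/- Let (W,S) be a Coxeter system and I ⊆ J ⊆ S with W_J finite. In the group algebra ℤ[G_W] of the Artin group, define T^J_I := Σ_{β ∈ W^J_I} (−1)^{ℓ(β)} g_β, where g_β = ψ(β) is the image of β under the canonical section. Under the ring map ℤ[G_W] → ℤ[q,q^{−1}] sending each g_s to −q, the element T^J_I maps to W_J(q)/W_I(q), the quotient of Poincaré polynomials, evaluated in ℤ[q,q^{-1}]. -/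
/-- The product in the free group of the generators indexed by a word. -/
def wordToFreeGroup {B : Type*} (l : List B) : FreeGroup B := (l.map FreeGroup.of).prod

/-- The braid relations of the Artin group of a Coxeter matrix `M`: for each pair `s, t` with
`m(s,t) = M s t` finite, the relation `g_s g_t g_s ⋯ = g_t g_s g_t ⋯` (`M s t` factors on each
side).  (In a `CoxeterMatrix`, the value `0` encodes `m(s,t) = ∞`, in which case the word below
is empty and the relation is trivial.) -/
def artinRelationsSet {B : Type*} (M : CoxeterMatrix B) : Set (FreeGroup B) :=
  {r | ∃ s t : B, r = wordToFreeGroup (CoxeterSystem.alternatingWord s t (M s t)) *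
      (wordToFreeGroup (CoxeterSystem.alternatingWord t s (M s t)))⁻¹}

/-- The Artin group of a Coxeter matrix `M`: generators `g_s`, `s ∈ S`, and braid relations
`g_s g_t g_s ⋯ = g_t g_s g_t ⋯` (`m(s,t)` factors on each side) for `m(s,t) < ∞`. -/
abbrev ArtinGroup {B : Type*} (M : CoxeterMatrix B) := PresentedGroup (artinRelationsSet M)

/-- The standard generator `g_s` of the Artin group. -/
def artinGen {B : Type*} (M : CoxeterMatrix B) (s : B) : ArtinGroup M := PresentedGroup.of s


open CoxeterSystem List

namespace CoxAux

variable {B W : Type*} [Group W] [DecidableEq W] {M : CoxeterMatrix B} (cs : CoxeterSystem M W)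

local prefix:100 "s" => cs.simple
local prefix:100 "π" => cs.wordProd
local prefix:100 "ℓ" => cs.length

lemma etaFun_involutive (i : B) :
    Function.Involutive (fun p : W × ℤˣ =>
      (s i * p.1 * s i, if p.1 = s i then -p.2 else p.2)) := by
  rintro ⟨t, ε⟩
  by_cases h : t = s i
  · simp [h, cs.simple_mul_simple_self]
  · have h2 : s i * t * s i ≠ s i := by
      intro hc
      apply h
      have := congrArg (fun x => s i * x * s i) hc
      simpa [mul_assoc, cs.simple_mul_simple_self, cs.simple_mul_simple_cancel_left] using this
    simp only [if_neg h2, if_neg h, Prod.mk.injEq]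
    refine ⟨?_, trivial⟩
    simp [mul_assoc, cs.simple_mul_simple_self, cs.simple_mul_simple_cancel_left]

/-- The permutation of `W × ℤˣ` attached to a simple generator. -/
def eta (i : B) : Equiv.Perm (W × ℤˣ) := (etaFun_involutive cs i).toPerm _

lemma eta_apply (i : B) (t : W) (ε : ℤˣ) :
    eta cs i (t, ε) = (s i * t * s i, if t = s i then -ε else ε) := rfl

/-- Product of the `eta` permutations along a word. -/
def F (ω : List B) : Equiv.Perm (W × ℤˣ) := (ω.map (eta cs)).prod

@[simp] lemma F_nil : F cs ([] : List B) = 1 := rfl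

lemma F_cons (i : B) (ω : List B) : F cs (i :: ω) = eta cs i * F cs ω := by
  simp [F]

lemma F_apply (ω : List B) (t : W) (ε : ℤˣ) :
    F cs ω (t, ε) = (π ω * t * (π ω)⁻¹,
      (-1 : ℤˣ) ^ ((cs.rightInvSeq ω).count t) * ε) := by
  induction ω generalizing t ε with
  | nil => simp
  | cons i ω ih =>
    rw [F_cons, Equiv.Perm.mul_apply, ih, eta_apply]
    have hris : cs.rightInvSeq (i :: ω) = ((π ω)⁻¹ * (s i) * (π ω)) :: cs.rightInvSeq ω := rfl
    have hcond : (π ω * t * (π ω)⁻¹ = s i) ↔ (t = (π ω)⁻¹ * (s i) * (π ω)) := by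
      constructor
      · intro h; rw [← h]; group
      · intro h; rw [h]; group
    rw [hris, cs.wordProd_cons, List.count_cons]
    by_cases h : t = (π ω)⁻¹ * (s i) * (π ω)
    · rw [if_pos (hcond.mpr h), if_pos (beq_iff_eq.mpr h.symm)]
      refine Prod.ext ?_ ?_
      · show s i * (π ω * t * (π ω)⁻¹) * s i = s i * π ω * t * (s i * π ω)⁻¹
        rw [h, mul_inv_rev, cs.inv_simple]
        group
      · show -((-1 : ℤˣ) ^ (List.count t (cs.rightInvSeq ω)) * ε) = _
        rw [pow_succ, mul_neg_one, neg_mul]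
    · rw [if_neg (fun hc => h (hcond.mp hc)),
        if_neg (by simpa using fun hc => h hc.symm)]
      refine Prod.ext ?_ ?_
      · show s i * (π ω * t * (π ω)⁻¹) * s i = s i * π ω * t * (s i * π ω)⁻¹
        rw [mul_inv_rev, cs.inv_simple]
        group
      · show (-1 : ℤˣ) ^ (List.count t (cs.rightInvSeq ω)) * ε = _
        rw [add_zero]

private lemma pow_mul_comm_aux {G : Type*} [Group G] (a b : G) (r : ℕ) :
    (a * b) ^ r * a = a * (b * a) ^ r := by
  induction r with
  | zero => simp
  | succ n ih =>
    rw [pow_succ', mul_assoc, ih, pow_succ', ← mul_assoc, ← mul_assoc, mul_assoc a b a]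

lemma getD_ris_alternatingWord (i j : B) (n k : ℕ) (h : k < n) :
    (cs.rightInvSeq (alternatingWord i j n)).getD k 1 = (s j * s i) ^ (n - 1 - k) * s j := by
  induction n generalizing i j k with
  | zero => omega
  | succ n ih =>
    rw [alternatingWord_succ, cs.rightInvSeq_concat]
    rcases Nat.lt_or_ge k n with hk | hk
    · have hlen : k < (List.map (⇑(MulAut.conj (s j))) (cs.rightInvSeq (alternatingWord j i n))).length := by
        simp [h, hk]
      rw [List.concat_eq_append, List.getD_append _ _ _ _ hlen]
      rw [List.getD_eq_getElem _ _ hlen, List.getElem_map,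
        ← List.getD_eq_getElem _ 1 (by simpa using hlen), ih j i k hk]
      show s j * ((s i * s j) ^ (n - 1 - k) * s i) * (s j)⁻¹ = _
      rw [cs.inv_simple, ← mul_assoc, ← pow_mul_comm_aux]
      have : n + 1 - 1 - k = (n - 1 - k) + 1 := by omega
      rw [this, pow_succ]
      group
    · have hk' : k = n := by omega
      subst hk'
      have hlen : (List.map (⇑(MulAut.conj (s j))) (cs.rightInvSeq (alternatingWord j i k))).length = k := by simp
      rw [List.concat_eq_append,
        List.getD_append_right _ _ _ _ (le_of_eq hlen), hlen]
      simp

lemma ris_alternatingWord_halves (i j : B) (m : ℕ) (hm : (s j * s i) ^ m = 1) :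
    ∃ u : List W, cs.rightInvSeq (alternatingWord i j (2 * m)) = u ++ u := by
  set L := cs.rightInvSeq (alternatingWord i j (2 * m)) with hL
  have hlen : L.length = 2 * m := by simp [hL]
  refine ⟨L.take m, ?_⟩
  have htake : (L.take m).length = m := by rw [List.length_take, hlen]; omega
  have hdrop : (L.drop m).length = m := by simp [hlen]; omega
  conv_lhs => rw [← List.take_append_drop m L]
  congr 1
  apply List.ext_getElem (by omega)
  intro k hk1 hk2
  rw [List.getElem_take, List.getElem_drop]
  have h1 : m + k < 2 * m := by omega
  have h2 : k < 2 * m := by omega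
  rw [← List.getD_eq_getElem L 1, ← List.getD_eq_getElem L 1, hL,
    getD_ris_alternatingWord cs i j _ _ (by omega),
    getD_ris_alternatingWord cs i j _ _ (by omega)]
  have e1 : 2 * m - 1 - k = m + (m - 1 - (k))  := by omega
  have e2 : 2 * m - 1 - (m + k) = m - 1 - k := by omega
  rw [e2, e1, pow_add, hm, one_mul]

end CoxAux

namespace CoxAux

variable {B W : Type*} [Group W] [DecidableEq W] {M : CoxeterMatrix B} (cs : CoxeterSystem M W)

local prefix:100 "s" => cs.simple
local prefix:100 "π" => cs.wordProd
local prefix:100 "ℓ" => cs.length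

lemma prod_map_alternatingWord_even {G : Type*} [Monoid G] (f : B → G) (i j : B) (m : ℕ) :
    ((alternatingWord i j (2 * m)).map f).prod = (f i * f j) ^ m := by
  induction m with
  | zero => simp [alternatingWord]
  | succ m ih =>
    have h1 : 2 * (m + 1) = (2 * m + 1) + 1 := by ring
    rw [h1, alternatingWord_succ' i j, alternatingWord_succ' i j]
    have : ¬ Even (2 * m + 1) := by simp [Nat.even_add_one]
    rw [if_neg this, if_pos (by simp : Even (2 * m))]
    simp only [List.map_cons, List.prod_cons, ih]
    rw [pow_succ']
    group

lemma eta_liftable : M.IsLiftable (fun i => eta cs i) := by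
  intro i j
  rcases Nat.eq_zero_or_pos (M i j) with h0 | hpos
  · rw [h0]; simp
  · set m := M i j with hm
    rw [← prod_map_alternatingWord_even (fun i => eta cs i) i j m]
    show F cs (alternatingWord i j (2 * m)) = 1
    have hπ : π (alternatingWord i j (2 * m)) = 1 := by
      rw [cs.prod_alternatingWord_eq_mul_pow]
      have he : (if Even (2 * m) then (1 : W) else s j) = 1 := if_pos ⟨m, two_mul m⟩
      rw [he, one_mul, Nat.mul_div_cancel_left m (by norm_num)]
      exact cs.simple_mul_simple_pow i j
    obtain ⟨u, hu⟩ := ris_alternatingWord_halves cs i j m (cs.simple_mul_simple_pow' i j)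
    apply Equiv.ext
    rintro ⟨t, ε⟩
    rw [F_apply, hπ, hu]
    simp only [List.count_append, one_mul, mul_one, inv_one]
    rw [← two_mul, pow_mul]
    norm_num

/-- The sign homomorphism `W →* Perm (W × ℤˣ)`. -/
def sgn : W →* Equiv.Perm (W × ℤˣ) := cs.lift ⟨fun i => eta cs i, eta_liftable cs⟩

lemma sgn_wordProd (ω : List B) : sgn cs (π ω) = F cs ω := by
  induction ω with
  | nil => simp [F]
  | cons i ω ih =>
    rw [cs.wordProd_cons, map_mul, ih, F_cons, sgn, cs.lift_apply_simple]

/-- Parity of the number of occurrences of `t` in the right inversion sequence depends only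
on the product of the word. -/
lemma count_ris_parity {ω ω' : List B} (h : π ω = π ω') (t : W) :
    (-1 : ℤˣ) ^ ((cs.rightInvSeq ω).count t) = (-1 : ℤˣ) ^ ((cs.rightInvSeq ω').count t) := by
  have hF : F cs ω = F cs ω' := by rw [← sgn_wordProd, ← sgn_wordProd, h]
  have h2 := congrArg (fun f : Equiv.Perm (W × ℤˣ) => (f (t, 1)).2) hF
  simpa [F_apply] using h2

lemma mem_ris_of_isRightDescent {ω : List B} (hω : cs.IsReduced ω) {a : B}
    (ha : cs.IsRightDescent (π ω) a) : s a ∈ cs.rightInvSeq ω := by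
  obtain ⟨ω', hred', heq'⟩ := cs.exists_reduced_word' (π ω * s a)
  have hprod : π (ω'.concat a) = π ω := by
    rw [cs.wordProd_concat, ← heq', mul_assoc, cs.simple_mul_simple_self, mul_one]
  have hcount := count_ris_parity cs hprod.symm (s a)
  by_contra hmem
  rw [List.count_eq_zero_of_not_mem hmem, pow_zero] at hcount
  rw [cs.rightInvSeq_concat] at hcount
  have hconj : List.count (s a) (List.map (⇑(MulAut.conj (s a))) (cs.rightInvSeq ω')) =
      List.count (s a) (cs.rightInvSeq ω') := by
    have := List.count_map_of_injective (cs.rightInvSeq ω') (⇑(MulAut.conj (s a)))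
      (MulAut.conj (s a)).injective (s a)
    simpa [MulAut.conj] using this
  have hone : List.count (s a) [s a] = 1 := by simp
  rw [List.concat_eq_append, List.count_append, hconj, hone] at hcount
  set c := List.count (s a) (cs.rightInvSeq ω') with hc
  have hodd : Odd c := by
    by_contra heven
    rw [Nat.not_odd_iff_even] at heven
    have : Odd (c + 1) := Even.add_one heven
    rw [this.neg_one_pow] at hcount
    exact (by decide : (1 : ℤˣ) ≠ -1) hcount
  have : s a ∈ cs.rightInvSeq ω' := by
    rw [← List.count_pos_iff]
    exact hodd.pos
  have hinv := cs.isRightInversion_of_mem_rightInvSeq hred' this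
  rw [← heq'] at hinv
  have := hinv.2
  rw [mul_assoc, cs.simple_mul_simple_self, mul_one] at this
  exact Nat.lt_asymm ha this

/-- The exchange property. -/
lemma exchange {ω : List B} (hω : cs.IsReduced ω) {a : B}
    (ha : cs.IsRightDescent (π ω) a) :
    ∃ j < ω.length, π ω * s a = π (ω.eraseIdx j) := by
  have hmem := mem_ris_of_isRightDescent cs hω ha
  obtain ⟨j, hj, hget⟩ := List.mem_iff_getElem.mp hmem
  rw [cs.length_rightInvSeq] at hj
  refine ⟨j, hj, ?_⟩
  rw [← cs.wordProd_mul_getD_rightInvSeq ω j, List.getD_eq_getElem _ 1 (by simpa using hj), hget]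

end CoxAux

namespace CoxAux

variable {B W : Type*} [Group W] [DecidableEq W] {M : CoxeterMatrix B} (cs : CoxeterSystem M W)

local prefix:100 "s" => cs.simple
local prefix:100 "π" => cs.wordProd
local prefix:100 "ℓ" => cs.length

/-- Deletion: a non-reduced word can be shortened by two letters, keeping the same product and
using only letters of the original word. -/
lemma exists_shorter_word {ω : List B} (h : ¬ cs.IsReduced ω) :
    ∃ ω' : List B, π ω' = π ω ∧ ω'.length + 2 = ω.length ∧ ∀ b ∈ ω', b ∈ ω := by
  have hne : ω ≠ [] := by rintro rfl; exact h (by simp [CoxeterSystem.IsReduced])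
  have hlen1 : 1 ≤ ω.length := List.length_pos_iff.mpr hne
  have hP : ∃ n, ¬ cs.IsReduced (ω.take (n + 1)) := by
    refine ⟨ω.length - 1, ?_⟩
    rwa [Nat.sub_add_cancel hlen1, List.take_of_length_le le_rfl]
  classical
  set k := Nat.find hP with hkdef
  have hk : ¬ cs.IsReduced (ω.take (k + 1)) := Nat.find_spec hP
  have hkle : k ≤ ω.length - 1 := Nat.find_min' hP (by
    rwa [Nat.sub_add_cancel hlen1, List.take_of_length_le le_rfl])
  have hklt : k < ω.length := by omega
  have hredk : cs.IsReduced (ω.take k) := by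
    rcases Nat.eq_zero_or_pos k with h0 | hpos
    · rw [h0]; simp [CoxeterSystem.IsReduced]
    · have := Nat.find_min hP (show k - 1 < k by omega)
      rw [not_not] at this
      have hkk : k - 1 + 1 = k := by omega
      rwa [hkk] at this
  have htake : ω.take (k + 1) = ω.take k ++ [ω[k]] := by
    rw [List.take_succ, List.getElem?_eq_getElem hklt]
    rfl
  have hlentk : (ω.take k).length = k := by
    rw [List.length_take]; omega
  have hlk : ℓ (π (ω.take k)) = k := by rw [hredk, hlentk]
  have hdesc : cs.IsRightDescent (π (ω.take k)) ω[k] := by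
    rcases cs.length_mul_simple (π (ω.take k)) ω[k] with hplus | hminus
    · exfalso
      apply hk
      rw [htake, CoxeterSystem.IsReduced, cs.wordProd_append, cs.wordProd_singleton, hplus,
        List.length_append, hlentk, hlk]
      simp
    · rw [CoxeterSystem.IsRightDescent]
      omega
  obtain ⟨j, hj, hex⟩ := exchange cs hredk hdesc
  rw [hlentk] at hj
  refine ⟨(ω.take k).eraseIdx j ++ ω.drop (k + 1), ?_, ?_, ?_⟩
  · rw [cs.wordProd_append, ← hex, ← cs.wordProd_singleton, mul_assoc,
      ← cs.wordProd_append, ← cs.wordProd_append, ← List.append_assoc, ← htake,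
      List.take_append_drop]
  · rw [List.length_append, List.length_eraseIdx, if_pos (by omega : j < (ω.take k).length),
      hlentk, List.length_drop]
    omega
  · intro b hb
    rcases List.mem_append.mp hb with hb | hb
    · exact List.mem_of_mem_take (((ω.take k).eraseIdx_sublist j).mem hb)
    · exact List.mem_of_mem_drop hb

/-- Every word admits a reduced word with the same product, using only its letters. -/
lemma exists_reduced_subword (ω : List B) :
    ∃ ω' : List B, cs.IsReduced ω' ∧ π ω' = π ω ∧ ∀ b ∈ ω', b ∈ ω := by
  generalize hn : ω.length = n
  induction n using Nat.strong_induction_on generalizing ω with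
  | _ n ih =>
    by_cases h : cs.IsReduced ω
    · exact ⟨ω, h, rfl, fun b hb => hb⟩
    · obtain ⟨ω₁, hprod, hlen, hmem⟩ := exists_shorter_word cs h
      obtain ⟨ω', hred', hprod', hmem'⟩ := ih ω₁.length (by omega) ω₁ rfl
      exact ⟨ω', hred', by rw [hprod', hprod], fun b hb => hmem b (hmem' b hb)⟩

/-- An element of a standard parabolic subgroup is a product of simple reflections indexed
by the subset. -/
lemma exists_word_subset {K : Set B} {w : W}
    (hw : w ∈ Subgroup.closure (cs.simple '' K)) :
    ∃ ω : List B, (∀ b ∈ ω, b ∈ K) ∧ π ω = w := by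
  induction hw using Subgroup.closure_induction with
  | mem x hx =>
    obtain ⟨k, hk, rfl⟩ := hx
    exact ⟨[k], by simpa using hk, by simp⟩
  | one => exact ⟨[], by simp, by simp⟩
  | mul x y hx hy ihx ihy =>
    obtain ⟨ω₁, h1, e1⟩ := ihx
    obtain ⟨ω₂, h2, e2⟩ := ihy
    refine ⟨ω₁ ++ ω₂, ?_, by rw [cs.wordProd_append, e1, e2]⟩
    intro b hb
    rcases List.mem_append.mp hb with hb | hb
    exacts [h1 b hb, h2 b hb]
  | inv x hx ihx =>
    obtain ⟨ω₁, h1, e1⟩ := ihx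
    exact ⟨ω₁.reverse, fun b hb => h1 b (List.mem_reverse.mp hb),
      by rw [cs.wordProd_reverse, e1]⟩

lemma mem_closure_of_word {K : Set B} {ω : List B} (h : ∀ b ∈ ω, b ∈ K) :
    π ω ∈ Subgroup.closure (cs.simple '' K) := by
  induction ω with
  | nil => rw [cs.wordProd_nil]; exact one_mem _
  | cons i ω ih =>
    rw [cs.wordProd_cons]
    exact mul_mem (Subgroup.subset_closure ⟨i, h i (by simp), rfl⟩)
      (ih fun b hb => h b (List.mem_cons_of_mem _ hb))

lemma exists_reduced_word_subset {K : Set B} {w : W}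
    (hw : w ∈ Subgroup.closure (cs.simple '' K)) :
    ∃ ω : List B, (∀ b ∈ ω, b ∈ K) ∧ cs.IsReduced ω ∧ π ω = w := by
  obtain ⟨ω, hK, hprod⟩ := exists_word_subset cs hw
  obtain ⟨ω', hred, hprod', hmem⟩ := exists_reduced_subword cs ω
  exact ⟨ω', fun b hb => hK b (hmem b hb), hred, by rw [hprod', hprod]⟩

/-- An element `≠ 1` of a standard parabolic subgroup has a right descent inside the subset. -/
lemma exists_rightDescent_mem {K : Set B} {u : W}
    (hu : u ∈ Subgroup.closure (cs.simple '' K)) (hne : u ≠ 1) :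
    ∃ a ∈ K, cs.IsRightDescent u a ∧ u * s a ∈ Subgroup.closure (cs.simple '' K) := by
  obtain ⟨ω, hK, hred, hprod⟩ := exists_reduced_word_subset cs hu
  rcases List.eq_nil_or_concat ω with rfl | ⟨ω₀, a, rfl⟩
  · exact absurd (by simpa using hprod.symm) hne
  have hu2 : u * s a = π ω₀ := by
    rw [← hprod, cs.wordProd_concat, mul_assoc, cs.simple_mul_simple_self, mul_one]
  refine ⟨a, hK a (by simp), ?_, ?_⟩
  · show ℓ (u * s a) < ℓ u
    rw [hu2, ← hprod]
    calc ℓ (π ω₀) ≤ ω₀.length := cs.length_wordProd_le ω₀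
    _ < (ω₀.concat a).length := by simp
    _ = ℓ (π (ω₀.concat a)) := hred.symm
  · rw [hu2]
    exact mem_closure_of_word cs fun b hb => hK b (by simp [hb])

lemma isRightDescent_length {u : W} {a : B} (h : cs.IsRightDescent u a) :
    ℓ (u * s a) + 1 = ℓ u := by
  rcases cs.length_mul_simple u a with h1 | h1
  · exact absurd h (by rw [CoxeterSystem.IsRightDescent]; omega)
  · exact h1

end CoxAux

namespace CoxAux

variable {B W : Type*} [Group W] [DecidableEq W] {M : CoxeterMatrix B} (cs : CoxeterSystem M W)

local prefix:100 "s" => cs.simple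
local prefix:100 "π" => cs.wordProd
local prefix:100 "ℓ" => cs.length

/-- Existence of the coset decomposition `w = β u` with `β` having no right descent in `I`. -/
lemma exists_decomp (I : Set B) (w : W) :
    ∃ β u : W, (∀ a ∈ I, ¬ cs.IsRightDescent β a) ∧
      u ∈ Subgroup.closure (cs.simple '' I) ∧ w = β * u ∧ ℓ w = ℓ β + ℓ u := by
  generalize hn : ℓ w = n
  induction n using Nat.strong_induction_on generalizing w with
  | _ n ih =>
    by_cases hd : ∀ a ∈ I, ¬ cs.IsRightDescent w a
    · exact ⟨w, 1, hd, one_mem _, by simp, by simp [hn]⟩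
    · push_neg at hd
      obtain ⟨a, haI, hdesc⟩ := hd
      have hlen : ℓ (w * s a) + 1 = ℓ w := isRightDescent_length cs hdesc
      obtain ⟨β, u', hβ, hu', heq, hadd⟩ := ih (ℓ (w * s a)) (by omega) (w * s a) rfl
      have hsa : s a ∈ Subgroup.closure (cs.simple '' I) :=
        Subgroup.subset_closure ⟨a, haI, rfl⟩
      refine ⟨β, u' * s a, hβ, mul_mem hu' hsa, ?_, ?_⟩
      · rw [← mul_assoc, ← heq, mul_assoc, cs.simple_mul_simple_self, mul_one]
      · have h1 : ℓ (u' * s a) ≤ ℓ u' + 1 := by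
          have := cs.length_mul_le u' (s a)
          rwa [cs.length_simple] at this
        have h2 : ℓ w ≤ ℓ β + ℓ (u' * s a) := by
          have h3 : w = β * (u' * s a) := by
            rw [← mul_assoc, ← heq, mul_assoc, cs.simple_mul_simple_self, mul_one]
          rw [h3]
          exact cs.length_mul_le β (u' * s a)
        omega

/-- Additivity of lengths for minimal coset representatives. -/
lemma length_decomp_add (I : Set B) :
    ∀ n (β : W), ℓ β = n → (∀ a ∈ I, ¬ cs.IsRightDescent β a) →
    ∀ m (u : W), ℓ u = m → u ∈ Subgroup.closure (cs.simple '' I) →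
    ℓ (β * u) = ℓ β + ℓ u := by
  intro n
  induction n using Nat.strong_induction_on with
  | _ n ihβ =>
    intro β hβn hβ m
    induction m using Nat.strong_induction_on generalizing β with
    | _ m ihu =>
      intro u hum hu
      by_cases hu1 : u = 1
      · simp [hu1]
      obtain ⟨a, haI, hdesc, hu'mem⟩ := exists_rightDescent_mem cs hu hu1
      set u' := u * s a with hu'def
      have hlenu' : ℓ u' + 1 = ℓ u := isRightDescent_length cs hdesc
      have hually : u' * s a = u := by
        rw [hu'def, mul_assoc, cs.simple_mul_simple_self, mul_one]
      have h1 : ℓ (β * u') = ℓ β + ℓ u' :=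
        ihu (ℓ u') (by omega) β hβn hβ u' rfl hu'mem
      have hβu : β * u = (β * u') * s a := by rw [mul_assoc, hually]
      rcases cs.length_mul_simple (β * u') a with hplus | hminus
      · rw [hβu, hplus, h1]; omega
      -- the impossible case
      exfalso
      have hdesc2 : cs.IsRightDescent (β * u') a := by
        rw [CoxeterSystem.IsRightDescent]; omega
      obtain ⟨α, hαred, hαeq⟩ := cs.exists_reduced_word' β
      obtain ⟨ι, hιK, hιred, hιeq⟩ := exists_reduced_word_subset cs hu'mem
      have hζprod : π (α ++ ι) = β * u' := by rw [cs.wordProd_append, ← hαeq, hιeq]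
      have hαlen : α.length = ℓ β := by rw [hαeq]; exact hαred.symm
      have hιlen : ι.length = ℓ u' := by rw [← hιeq]; exact hιred.symm
      have hζred : cs.IsReduced (α ++ ι) := by
        rw [CoxeterSystem.IsReduced, hζprod, List.length_append, hαlen, hιlen, h1]
      have hdesc3 : cs.IsRightDescent (π (α ++ ι)) a := by rwa [hζprod]
      obtain ⟨j, hj, hex⟩ := exchange cs hζred hdesc3
      rw [hζprod] at hex
      rw [List.length_append] at hj
      rcases Nat.lt_or_ge j α.length with hjα | hjα
      · -- deletion in the β part: contradiction with minimality
        rw [List.eraseIdx_append_of_lt_length hjα] at hex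
        set x := π (α.eraseIdx j) with hxdef
        have hxu : β * u = x * u' := by
          rw [hβu, hex, cs.wordProd_append, hιeq]
        have hxlen : ℓ x ≤ ℓ β - 1 := by
          calc ℓ x ≤ (α.eraseIdx j).length := cs.length_wordProd_le _
          _ = α.length - 1 := by rw [List.length_eraseIdx, if_pos hjα]
          _ = ℓ β - 1 := by rw [hαlen]
        have hβpos : 1 ≤ ℓ β := by
          rcases Nat.eq_zero_or_pos (ℓ β) with h0 | h
          · exfalso
            rw [cs.length_eq_zero_iff] at h0
            -- β = 1 : then β * u' has descent a, but β * u' = u' and u' * s a = u has bigger length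
            rw [h0, one_mul] at hdesc2
            rw [CoxeterSystem.IsRightDescent, hually] at hdesc2
            omega
          · exact h
        obtain ⟨β₁, u₁, hβ₁, hu₁, heq₁, hadd₁⟩ := exists_decomp cs I x
        have hβ₁lt : ℓ β₁ < ℓ β := by omega
        have hw₂mem : u₁ * u' * u⁻¹ ∈ Subgroup.closure (cs.simple '' I) :=
          mul_mem (mul_mem hu₁ hu'mem) (inv_mem hu)
        set w₂ := u₁ * u' * u⁻¹ with hw₂def
        have hβeq : β = β₁ * w₂ := by
          have h7 : β * u = β₁ * (u₁ * u') := by rw [hxu, heq₁, mul_assoc]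
          calc β = β * u * u⁻¹ := by group
          _ = β₁ * (u₁ * u') * u⁻¹ := by rw [h7]
          _ = β₁ * w₂ := by rw [hw₂def]; group
        have hS : ℓ (β₁ * w₂) = ℓ β₁ + ℓ w₂ :=
          ihβ (ℓ β₁) (by omega) β₁ rfl hβ₁ (ℓ w₂) w₂ rfl hw₂mem
        have hw₂ne : w₂ ≠ 1 := by
          intro hc
          rw [hc, mul_one] at hβeq
          rw [hβeq] at hβ₁lt
          omega
        obtain ⟨b, hbI, hdescb, hw₂b⟩ := exists_rightDescent_mem cs hw₂mem hw₂ne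
        have hlw₂b : ℓ (w₂ * s b) + 1 = ℓ w₂ := isRightDescent_length cs hdescb
        have : ℓ (β * s b) < ℓ β := by
          have h5 : β * s b = β₁ * (w₂ * s b) := by rw [hβeq, mul_assoc]
          have h6 : ℓ (β₁ * (w₂ * s b)) = ℓ β₁ + ℓ (w₂ * s b) :=
            ihβ (ℓ β₁) (by omega) β₁ rfl hβ₁ (ℓ (w₂ * s b)) (w₂ * s b) rfl hw₂b
          rw [h5, h6, hβeq, hS]
          omega
        exact hβ b hbI this
      · -- deletion in the u' part: contradiction with length of u
        rw [List.eraseIdx_append_of_length_le hjα] at hex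
        have hueq : u = π (ι.eraseIdx (j - α.length)) := by
          have : β * u = β * π (ι.eraseIdx (j - α.length)) := by
            rw [hβu, hex, cs.wordProd_append, ← hαeq]
          exact mul_left_cancel this
        have : ℓ u ≤ (ι.eraseIdx (j - α.length)).length := by
          rw [hueq]; exact cs.length_wordProd_le _
        rw [List.length_eraseIdx, if_pos (by omega : j - α.length < ι.length)] at this
        omega

/-- Uniqueness of the decomposition. -/
lemma decomp_unique (I : Set B) {β u β' u' : W}
    (hβ : ∀ a ∈ I, ¬ cs.IsRightDescent β a) (hβ' : ∀ a ∈ I, ¬ cs.IsRightDescent β' a)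
    (hu : u ∈ Subgroup.closure (cs.simple '' I)) (hu' : u' ∈ Subgroup.closure (cs.simple '' I))
    (heq : β * u = β' * u') : β = β' ∧ u = u' := by
  set v := u * u'⁻¹ with hv
  have hvmem : v ∈ Subgroup.closure (cs.simple '' I) := mul_mem hu (inv_mem hu')
  have hβ'eq : β' = β * v := by
    have : β * v = β' := by
      calc β * v = β * u * u'⁻¹ := by rw [hv, mul_assoc]
      _ = β' * u' * u'⁻¹ := by rw [heq]
      _ = β' := by group
    rw [this]
  have hβeq : β = β' * v⁻¹ := by rw [hβ'eq]; group
  have h1 : ℓ β' = ℓ β + ℓ v := by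
    rw [hβ'eq]
    exact length_decomp_add cs I (ℓ β) β rfl hβ (ℓ v) v rfl hvmem
  have h2 : ℓ β = ℓ β' + ℓ v⁻¹ := by
    rw [hβeq]
    exact length_decomp_add cs I (ℓ β') β' rfl hβ' (ℓ v⁻¹) v⁻¹ rfl (inv_mem hvmem)
  rw [cs.length_inv] at h2
  have hv0 : ℓ v = 0 := by omega
  rw [cs.length_eq_zero_iff] at hv0
  have huu : u = u' := by
    have h8 : u * u'⁻¹ = 1 := by rw [← hv]; exact hv0
    exact mul_inv_eq_one.mp h8
  exact ⟨by rw [hβ'eq, hv0, mul_one], huu⟩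

end CoxAux

open CoxAux

/-- Let `(W, S)` be a Coxeter system and `I ⊆ J ⊆ S` with `W_J` finite.  In the group algebra
`ℤ[G_W]` of the Artin group, let `T^J_I = Σ_{β ∈ W^J_I} (-1)^{ℓ(β)} g_β`, where
`W^J_I = {β ∈ W_J : ℓ(βs) > ℓ(β) ∀ s ∈ I}` is the set of minimal left coset representatives of
`W_I` in `W_J` and `g_β = ψ(β)` is the image of `β` under the canonical section `ψ` (sending a
reduced expression to the corresponding product of Artin generators).  Under any ring map
`φ : ℤ[G_W] → ℤ[q, q⁻¹]` sending each `g_s` to `-q`, the element `T^J_I` maps to the quotient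
`W_J(q) / W_I(q)` of Poincaré polynomials; equivalently `W_I(q) · φ(T^J_I) = W_J(q)`. -/
theorem T_maps_to_poincare_quotient {B W : Type*} [Group W] (M : CoxeterMatrix B)
    (cs : CoxeterSystem M W) (I J : Set B) (hIJ : I ⊆ J)
    (hfin : Finite (Subgroup.closure (cs.simple '' J) : Subgroup W))
    (ψ : W → ArtinGroup M)
    (hψ : ∀ (w : W) (l : List B), cs.wordProd l = w → cs.IsReduced l →
      ψ w = (l.map (artinGen M)).prod)
    (φ : MonoidAlgebra ℤ (ArtinGroup M) →+* LaurentPolynomial ℤ)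
    (hφ : ∀ s : B, φ (MonoidAlgebra.single (artinGen M s) 1) = -LaurentPolynomial.T 1) :
    (∑ᶠ w ∈ ((Subgroup.closure (cs.simple '' I) : Subgroup W) : Set W),
        (LaurentPolynomial.T 1 : LaurentPolynomial ℤ) ^ cs.length w) *
      φ (∑ᶠ β ∈ {β : W | β ∈ Subgroup.closure (cs.simple '' J) ∧
            ∀ s ∈ I, cs.length β < cs.length (β * cs.simple s)},
          MonoidAlgebra.single (ψ β) ((-1 : ℤ) ^ cs.length β)) =
    ∑ᶠ w ∈ ((Subgroup.closure (cs.simple '' J) : Subgroup W) : Set W),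
      (LaurentPolynomial.T 1 : LaurentPolynomial ℤ) ^ cs.length w := by
  classical
  set q : LaurentPolynomial ℤ := LaurentPolynomial.T 1 with hq
  set PI : Subgroup W := Subgroup.closure (cs.simple '' I) with hPI
  set PJ : Subgroup W := Subgroup.closure (cs.simple '' J) with hPJ
  set D : Set W := {β : W | β ∈ PJ ∧ ∀ s ∈ I, cs.length β < cs.length (β * cs.simple s)}
    with hD
  haveI : Finite ↥PJ := hfin
  have hPJfin : ((PJ : Set W)).Finite := Set.toFinite _
  have hPIle : PI ≤ PJ := Subgroup.closure_mono (Set.image_mono hIJ)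
  have hPIfin : ((PI : Set W)).Finite := hPJfin.subset hPIle
  have hDfin : D.Finite := hPJfin.subset (fun β hβ => hβ.1)
  -- translation between the two descent conditions
  have hDdesc : ∀ β : W, (∀ a ∈ I, cs.length β < cs.length (β * cs.simple a)) →
      (∀ a ∈ I, ¬ cs.IsRightDescent β a) := by
    intro β h a ha
    have := h a ha
    rw [CoxeterSystem.IsRightDescent]
    omega
  have hDdesc' : ∀ β : W, (∀ a ∈ I, ¬ cs.IsRightDescent β a) →
      (∀ a ∈ I, cs.length β < cs.length (β * cs.simple a)) := by
    intro β h a ha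
    have h1 := cs.length_mul_simple_ne β a
    have h2 := h a ha
    rw [CoxeterSystem.IsRightDescent] at h2
    omega
  -- computation of φ on group-like elements
  have hφsingle : ∀ ω : List B,
      φ (MonoidAlgebra.single ((ω.map (artinGen M)).prod) (1 : ℤ)) = (-q) ^ ω.length := by
    intro ω
    induction ω with
    | nil =>
      rw [List.map_nil, List.prod_nil, ← MonoidAlgebra.one_def, map_one, List.length_nil,
        pow_zero]
    | cons i ω ih =>
      rw [List.map_cons, List.prod_cons]
      have hsplit : (MonoidAlgebra.single (artinGen M i * (ω.map (artinGen M)).prod) (1 : ℤ))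
          = MonoidAlgebra.single (artinGen M i) 1 *
            MonoidAlgebra.single ((ω.map (artinGen M)).prod) 1 := by
        rw [MonoidAlgebra.single_mul_single, one_mul]
      rw [hsplit, map_mul, hφ i, ih, List.length_cons, pow_succ']
  have hφψ : ∀ β : W, φ (MonoidAlgebra.single (ψ β) ((-1 : ℤ) ^ cs.length β))
      = q ^ cs.length β := by
    intro β
    obtain ⟨ω, hred, heq⟩ := cs.exists_reduced_word' β
    have hl : cs.length β = ω.length := by rw [heq]; exact hred
    rw [hψ β ω heq.symm hred]
    have hsm : MonoidAlgebra.single ((ω.map (artinGen M)).prod) ((-1 : ℤ) ^ cs.length β)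
        = ((-1 : ℤ) ^ cs.length β) • MonoidAlgebra.single ((ω.map (artinGen M)).prod) (1 : ℤ) := by
      rw [MonoidAlgebra.smul_single', mul_one]
    rw [hsm, map_zsmul, hφsingle, ← hl, zsmul_eq_mul, Int.cast_pow, Int.cast_neg,
      Int.cast_one, ← mul_pow, neg_mul_neg, one_mul]
  -- rewrite all finsums as finite sums
  rw [finsum_mem_eq_finite_toFinset_sum _ hDfin, finsum_mem_eq_finite_toFinset_sum _ hPIfin,
    finsum_mem_eq_finite_toFinset_sum _ hPJfin, map_sum]
  rw [Finset.sum_congr rfl (fun β _ => hφψ β)]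
  -- the decomposition function
  have hdec : ∀ w : W, ∃ p : W × W, (∀ a ∈ I, ¬ cs.IsRightDescent p.1 a) ∧ p.2 ∈ PI ∧
      w = p.1 * p.2 ∧ cs.length w = cs.length p.1 + cs.length p.2 := by
    intro w
    obtain ⟨β, u, h1, h2, h3, h4⟩ := exists_decomp cs I w
    exact ⟨(β, u), h1, h2, h3, h4⟩
  rw [Finset.sum_mul_sum, ← Finset.sum_product']
  refine Finset.sum_nbij' (fun p => p.2 * p.1)
    (fun w => ((Classical.choose (hdec w)).2, (Classical.choose (hdec w)).1))
    ?_ ?_ ?_ ?_ ?_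
  · rintro ⟨u, β⟩ hp
    rw [Finset.mem_product, Set.Finite.mem_toFinset, Set.Finite.mem_toFinset] at hp
    obtain ⟨hu, hβ⟩ := hp
    rw [Set.Finite.mem_toFinset]
    exact mul_mem hβ.1 (hPIle hu)
  · intro w hw
    rw [Set.Finite.mem_toFinset] at hw
    obtain ⟨h1, h2, h3, h4⟩ := Classical.choose_spec (hdec w)
    rw [Finset.mem_product, Set.Finite.mem_toFinset, Set.Finite.mem_toFinset]
    constructor
    · exact h2
    · refine ⟨?_, hDdesc' _ h1⟩
      show (Classical.choose (hdec w)).1 ∈ PJ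
      have heq1 : (Classical.choose (hdec w)).1 = w * (Classical.choose (hdec w)).2⁻¹ :=
        eq_mul_inv_of_mul_eq h3.symm
      rw [heq1]
      exact mul_mem hw (inv_mem (hPIle h2))
  · rintro ⟨u, β⟩ hp
    rw [Finset.mem_product, Set.Finite.mem_toFinset, Set.Finite.mem_toFinset] at hp
    obtain ⟨hu, hβ⟩ := hp
    obtain ⟨h1, h2, h3, h4⟩ := Classical.choose_spec (hdec (β * u))
    have := decomp_unique cs I h1 (hDdesc _ hβ.2) h2 hu h3.symm
    rw [Prod.ext_iff]
    exact ⟨this.2, this.1⟩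
  · intro w hw
    obtain ⟨h1, h2, h3, h4⟩ := Classical.choose_spec (hdec w)
    exact h3.symm
  · rintro ⟨u, β⟩ hp
    rw [Finset.mem_product, Set.Finite.mem_toFinset, Set.Finite.mem_toFinset] at hp
    obtain ⟨hu, hβ⟩ := hp
    have hadd : cs.length (β * u) = cs.length β + cs.length u :=
      length_decomp_add cs I (cs.length β) β rfl (hDdesc _ hβ.2) (cs.length u) u rfl hu
    show q ^ cs.length u * q ^ cs.length β = q ^ cs.length (β * u)
    rw [hadd, pow_add, mul_comm]
end

section
/- For a Coxeter system (W,S) and the chain complex C_* of free ℤ[G_W]-modules with C_k = ⊕_{J⊆S, |J|=k, W_J finite} ℤ[G_W]·e_J and boundary ∂e_J = Σ_{I⊂J, |I|=k−1} [I:J] T^J_I e_I, specialize via g_s ↦ −q to get the complex over ℤ[q,q^{−1}] with boundary ∂e_J = Σ_{I⊂J,|I|=|J|−1} [I:J] (W_J(q)/W_I(q)) e_I. Prove that for the braid case A_2 (S = {s,t}, m(s,t)=3), this specialized complex has H² equal to ℤ[q,q^{−1}]/(q²−q+1) ≅ ℤ[q]/(q²−q+1). -/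
open LaurentPolynomial

/-- `[3] = 1 + q + q²` in `ℤ[q, q⁻¹]`, the quotient `W_{{s,t}}(q) / W_{{s}}(q)` of Poincaré
polynomials for the Coxeter system of type `A₂`. -/
noncomputable def qThree : LaurentPolynomial ℤ := 1 + T 1 + T 2

/-- The top boundary of the specialized complex of type `A₂` (`S = {s, t}`, `m(s,t) = 3`),
dualized:  `δ¹ : C^1 = R·e_{{s}} ⊕ R·e_{{t}} → C^2 = R·e_{{s,t}}`,
`(a, b) ↦ [3]·a − [3]·b`, over `R = ℤ[q, q⁻¹]`. -/
noncomputable def deltaOne :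
    (LaurentPolynomial ℤ × LaurentPolynomial ℤ) →ₗ[LaurentPolynomial ℤ] LaurentPolynomial ℤ :=
  qThree • (LinearMap.fst (LaurentPolynomial ℤ) (LaurentPolynomial ℤ) (LaurentPolynomial ℤ) -
    LinearMap.snd (LaurentPolynomial ℤ) (LaurentPolynomial ℤ) (LaurentPolynomial ℤ))

set_option maxHeartbeats 1000000

/-- `-T 1` is a unit of `ℤ[q,q⁻¹]` with inverse `-T (-1)`. -/
noncomputable def negTUnit : (LaurentPolynomial ℤ)ˣ where
  val := -T 1
  inv := -T (-1)
  val_inv := by rw [neg_mul_neg, ← LaurentPolynomial.T_add]; norm_num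
  inv_val := by rw [neg_mul_neg, ← LaurentPolynomial.T_add]; norm_num

/-- The algebra endomorphism `q ↦ -q` of `ℤ[q,q⁻¹]`. -/
noncomputable def negMap : LaurentPolynomial ℤ →ₐ[ℤ] LaurentPolynomial ℤ :=
  AddMonoidAlgebra.lift ℤ (LaurentPolynomial ℤ) ℤ
    ((Units.coeHom _).comp (zpowersHom (LaurentPolynomial ℤ)ˣ negTUnit))

lemma negTUnit_zpow (n : ℤ) :
    ((negTUnit ^ n : (LaurentPolynomial ℤ)ˣ) : LaurentPolynomial ℤ) =
      C ((n.negOnePow : ℤ)) * T n := by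
  induction n using Int.induction_on with
  | zero => simp
  | succ k ih =>
      rw [zpow_add_one, Units.val_mul, ih,
        show ((negTUnit : (LaurentPolynomial ℤ)ˣ) : LaurentPolynomial ℤ) = -T 1 from rfl,
        Int.negOnePow_succ, show (((k : ℤ) + 1) : ℤ) = (k : ℤ) + 1 from rfl,
        LaurentPolynomial.T_add]
      push_cast
      rw [map_neg]
      ring
  | pred k ih =>
      rw [zpow_sub_one, Units.val_mul, ih,
        show ((negTUnit⁻¹ : (LaurentPolynomial ℤ)ˣ) : LaurentPolynomial ℤ) = -T (-1) from rfl,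
        show (-(k : ℤ) - 1) = (-(k : ℤ)) + (-1) by ring, LaurentPolynomial.T_add,
        Int.negOnePow_add]
      push_cast [Int.negOnePow_neg, Int.negOnePow_one]
      rw [map_mul, map_neg, map_one]
      ring

lemma negMap_T (n : ℤ) :
    negMap (T n) = C ((n.negOnePow : ℤ)) * T n := by
  have h : (T n : LaurentPolynomial ℤ) = AddMonoidAlgebra.of ℤ ℤ (Multiplicative.ofAdd n) := rfl
  rw [h, negMap, AddMonoidAlgebra.lift_of]
  exact negTUnit_zpow n

lemma negMap_C (a : ℤ) : negMap (C a) = C a := by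
  rw [LaurentPolynomial.C_eq_algebraMap, AlgHom.commutes]

lemma negMap_negMap (x : LaurentPolynomial ℤ) : negMap (negMap x) = x := by
  have : negMap.comp negMap = AlgHom.id ℤ (LaurentPolynomial ℤ) := by
    apply AddMonoidAlgebra.algHom_ext
    intro n
    have hT : (AddMonoidAlgebra.single n (1 : ℤ) : LaurentPolynomial ℤ) = T n := rfl
    simp only [AlgHom.coe_comp, Function.comp_apply, AlgHom.id_apply, hT]
    rw [negMap_T, map_mul, negMap_C, negMap_T, ← mul_assoc, ← map_mul]
    have h1 : ((n.negOnePow : ℤ)) * ((n.negOnePow : ℤ)) = 1 := by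
      rcases Int.even_or_odd n with h | h
      · rw [Int.negOnePow_even _ h]; norm_num
      · rw [Int.negOnePow_odd _ h]; norm_num
    rw [h1, map_one, one_mul]
    exact Subsingleton.elim _ _
  exact congrFun (congrArg DFunLike.coe this) x

/-- The ring automorphism `q ↦ -q` of `ℤ[q,q⁻¹]`. -/
noncomputable def negEquiv : LaurentPolynomial ℤ ≃+* LaurentPolynomial ℤ :=
  RingEquiv.ofRingHom negMap.toRingHom negMap.toRingHom
    (RingHom.ext negMap_negMap) (RingHom.ext negMap_negMap)

lemma range_deltaOne :
    (LinearMap.range deltaOne : Ideal (LaurentPolynomial ℤ)) = Ideal.span {qThree} := by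
  apply le_antisymm
  · rintro x ⟨⟨a, b⟩, rfl⟩
    rw [Ideal.mem_span_singleton]
    exact ⟨a - b, by simp [deltaOne]⟩
  · intro x hx
    rw [Ideal.mem_span_singleton] at hx
    obtain ⟨c, rfl⟩ := hx
    exact ⟨(c, 0), by simp [deltaOne]⟩

lemma negEquiv_qThree : negEquiv qThree = T 2 - T 1 + 1 := by
  show negMap qThree = _
  simp only [qThree, map_add, map_one, negMap_T]
  rw [show (((1 : ℤ).negOnePow : ℤ)) = -1 from by
      rw [Int.negOnePow_odd _ ⟨0, by ring⟩]; simp,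
    show (((2 : ℤ).negOnePow : ℤ)) = 1 from by
      rw [Int.negOnePow_even _ ⟨1, by ring⟩]; simp]
  simp only [map_neg, map_one, neg_mul, one_mul]
  ring

/-- First isomorphism: the cokernel is `ℤ[q,q⁻¹]/(q² - q + 1)`. -/
noncomputable def isoA :
    (LaurentPolynomial ℤ ⧸ (LinearMap.range deltaOne : Ideal (LaurentPolynomial ℤ))) ≃+*
      (LaurentPolynomial ℤ ⧸ Ideal.span ({T 2 - T 1 + 1} : Set (LaurentPolynomial ℤ))) := by
  rw [range_deltaOne]
  exact Ideal.quotientEquiv _ _ negEquiv (by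
    rw [Ideal.map_span, Set.image_singleton]
    exact congrArg (fun x => Ideal.span {x}) negEquiv_qThree.symm)

section second

noncomputable abbrev Iideal : Ideal (Polynomial ℤ) :=
  Ideal.span ({Polynomial.X ^ 2 - Polynomial.X + 1} : Set (Polynomial ℤ))

noncomputable abbrev Jideal : Ideal (LaurentPolynomial ℤ) :=
  Ideal.span ({T 2 - T 1 + 1} : Set (LaurentPolynomial ℤ))

lemma mkR_X_isUnit : IsUnit (Ideal.Quotient.mk Iideal Polynomial.X) := by
  refine IsUnit.of_mul_eq_one (Ideal.Quotient.mk _ (1 - Polynomial.X)) ?_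
  rw [← map_mul, ← map_one (Ideal.Quotient.mk Iideal), Ideal.Quotient.eq,
    Ideal.mem_span_singleton]
  exact ⟨-1, by ring⟩

/-- The map `ℤ[q,q⁻¹] → ℤ[X]/(X²-X+1)` obtained from the localization universal property. -/
noncomputable def psi : LaurentPolynomial ℤ →+* Polynomial ℤ ⧸ Iideal := by
  letI := LaurentPolynomial.isLocalization (R := ℤ)
  exact IsLocalization.lift (M := Submonoid.powers (Polynomial.X : Polynomial ℤ))
    (g := Ideal.Quotient.mk Iideal) (by
      rintro ⟨t, n, rfl⟩
      simpa using mkR_X_isUnit.pow n)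

lemma psi_toLaurent (p : Polynomial ℤ) :
    psi (Polynomial.toLaurent p) = Ideal.Quotient.mk Iideal p := by
  letI := LaurentPolynomial.isLocalization (R := ℤ)
  have := IsLocalization.lift_eq (M := Submonoid.powers (Polynomial.X : Polynomial ℤ))
    (S := LaurentPolynomial ℤ)
    (g := Ideal.Quotient.mk Iideal)
    (by rintro ⟨t, n, rfl⟩; simpa using mkR_X_isUnit.pow n) p
  simpa [psi] using this

lemma key_poly : Polynomial.toLaurent
    ((Polynomial.X : Polynomial ℤ) ^ 2 - Polynomial.X + 1) = T 2 - T 1 + 1 := by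
  simp [Polynomial.toLaurent_X_pow]

lemma psi_gen : psi (T 2 - T 1 + 1) = 0 := by
  rw [← key_poly, psi_toLaurent]
  exact Ideal.Quotient.eq_zero_iff_mem.mpr (Ideal.subset_span rfl)

lemma mkJ_gen : Ideal.Quotient.mk Jideal (T 2 - T 1 + 1) = 0 :=
  Ideal.Quotient.eq_zero_iff_mem.mpr (Ideal.subset_span rfl)

/-- Induced map on quotients. -/
noncomputable def psiBar : (LaurentPolynomial ℤ ⧸ Jideal) →+* Polynomial ℤ ⧸ Iideal :=
  Ideal.Quotient.lift _ psi (by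
    intro a ha
    rw [Ideal.mem_span_singleton] at ha
    obtain ⟨c, rfl⟩ := ha
    rw [map_mul, psi_gen, zero_mul])

noncomputable def phiBar : (Polynomial ℤ ⧸ Iideal) →+* (LaurentPolynomial ℤ ⧸ Jideal) :=
  Ideal.Quotient.lift _ ((Ideal.Quotient.mk Jideal).comp Polynomial.toLaurent) (by
    intro a ha
    rw [Ideal.mem_span_singleton] at ha
    obtain ⟨c, rfl⟩ := ha
    simp only [RingHom.comp_apply, map_mul, key_poly, mkJ_gen, zero_mul])

noncomputable def isoB : (LaurentPolynomial ℤ ⧸ Jideal) ≃+* Polynomial ℤ ⧸ Iideal := by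
  refine RingEquiv.ofRingHom psiBar phiBar ?_ ?_
  swap
  · -- phiBar ∘ psiBar = id on Laurent quotient
    have key : (phiBar.comp psiBar).comp (Ideal.Quotient.mk Jideal) =
        (RingHom.id _).comp (Ideal.Quotient.mk Jideal) := by
      letI := LaurentPolynomial.isLocalization (R := ℤ)
      apply IsLocalization.ringHom_ext (M := Submonoid.powers (Polynomial.X : Polynomial ℤ))
      refine RingHom.ext fun p => ?_
      simp only [RingHom.comp_apply, LaurentPolynomial.algebraMap_eq_toLaurent, RingHom.id_apply]
      rw [show psiBar (Ideal.Quotient.mk Jideal (Polynomial.toLaurent p)) =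
        psi (Polynomial.toLaurent p) from rfl, psi_toLaurent]
      rfl
    refine RingHom.ext fun x => ?_
    obtain ⟨a, rfl⟩ := Ideal.Quotient.mk_surjective x
    exact RingHom.congr_fun key a
  · -- psiBar ∘ phiBar = id on Polynomial quotient
    have key : (psiBar.comp phiBar).comp (Ideal.Quotient.mk Iideal) =
        (RingHom.id _).comp (Ideal.Quotient.mk Iideal) := by
      refine Polynomial.ringHom_ext (fun a => ?_) ?_
      · simp only [RingHom.comp_apply, RingHom.id_apply]
        rw [show phiBar (Ideal.Quotient.mk Iideal (Polynomial.C a)) =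
          Ideal.Quotient.mk Jideal (Polynomial.toLaurent (Polynomial.C a)) from rfl]
        rw [show psiBar (Ideal.Quotient.mk Jideal (Polynomial.toLaurent (Polynomial.C a))) =
          psi (Polynomial.toLaurent (Polynomial.C a)) from rfl, psi_toLaurent]
      · simp only [RingHom.comp_apply, RingHom.id_apply]
        rw [show phiBar (Ideal.Quotient.mk Iideal Polynomial.X) =
          Ideal.Quotient.mk Jideal (Polynomial.toLaurent Polynomial.X) from rfl]
        rw [show psiBar (Ideal.Quotient.mk Jideal (Polynomial.toLaurent Polynomial.X)) =
          psi (Polynomial.toLaurent Polynomial.X) from rfl, psi_toLaurent]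
    refine RingHom.ext fun x => ?_
    obtain ⟨a, rfl⟩ := Ideal.Quotient.mk_surjective x
    exact RingHom.congr_fun key a

end second

/-- For the braid case `A₂` (`S = {s, t}`, `m(s,t) = 3`), the complex of free
`ℤ[q, q⁻¹]`-modules obtained from the Artin complex by the specialization `g_s ↦ -q`, with
boundary `∂e_J = Σ [I:J] (W_J(q)/W_I(q)) e_I`, has top cohomology
`H² = coker(δ¹) = ℤ[q, q⁻¹]/(q² − q + 1) ≅ ℤ[q]/(q² − q + 1)`. -/
theorem top_cohomology_A2 :
    Nonempty ((LaurentPolynomial ℤ ⧸ (LinearMap.range deltaOne : Ideal (LaurentPolynomial ℤ))) ≃+*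
        (LaurentPolynomial ℤ ⧸ Ideal.span ({T 2 - T 1 + 1} : Set (LaurentPolynomial ℤ)))) ∧
    Nonempty ((LaurentPolynomial ℤ ⧸ Ideal.span ({T 2 - T 1 + 1} : Set (LaurentPolynomial ℤ))) ≃+*
        (Polynomial ℤ ⧸ Ideal.span
          ({Polynomial.X ^ 2 - Polynomial.X + 1} : Set (Polynomial ℤ)))) := by
  exact ⟨⟨isoA⟩, ⟨isoB⟩⟩
end
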